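/- Let H be a finite simple graph with a designated twin set TS(H) and let 0 ≤ k < |TS(H)|. If the families D_k(H) and D_{k+1}(H) are both nonempty, then |γ_k(H) − γ_{k+1}(H)| = 1. -/
import Mathlib


/-- A finite simple graph on a subset of an ambient vertex type `α`,
together with a designated twin set `TS ⊆ verts`. -/
structure TSGraph (α : Type*) where
  verts : Finset α
  Adj : α → α → Prop
  symm : ∀ u v, Adj u v → Adj v u
  irrefl : ∀ u, ¬ Adj u u
  adj_mem : ∀ u v, Adj u v → u ∈ verts ∧ v ∈ verts
  TS : Finset α
  TS_sub : TS ⊆ verts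

namespace TSGraph

variable {α : Type*} [DecidableEq α]

/-- `f` encodes a perfect matching of the subgraph of `G` induced by `S`:
every vertex of `S` is paired with an adjacent vertex of `S`, involutively. -/
def IsPM (G : TSGraph α) (S : Finset α) (f : α → α) : Prop :=
  ∀ v ∈ S, f v ∈ S ∧ G.Adj v (f v) ∧ f (f v) = v

/-- `S ⊆ V(G)` dominates `V(G) − TS(G)` and, for some `X ⊆ S ∩ TS(G)` of size `k`,
the subgraph induced by `S − X` has a perfect matching. -/
def Adm (G : TSGraph α) (k : ℕ) (S : Finset α) : Prop :=
  S ⊆ G.verts ∧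
  (∀ v ∈ G.verts, v ∉ G.TS → v ∈ S ∨ ∃ u ∈ S, G.Adj u v) ∧
  ∃ X ⊆ S ∩ G.TS, X.card = k ∧ ∃ f, G.IsPM (S \ X) f

/-- Membership in the family `D_k(G)`: admissible of minimum cardinality. -/
def memD (G : TSGraph α) (k : ℕ) (S : Finset α) : Prop :=
  G.Adm k S ∧ ∀ S', G.Adm k S' → S.card ≤ S'.card

/-- `D_k(G) ≠ ∅`. -/
def DkNonempty (G : TSGraph α) (k : ℕ) : Prop := ∃ S, G.memD k S

/-- `D_k(G) ≠ ∅` for all `0 ≤ k ≤ |TS(G)|`. -/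
def AllDkNonempty (G : TSGraph α) : Prop := ∀ k ≤ G.TS.card, G.DkNonempty k

/-- `γ_k(G)`: the common cardinality of the members of `D_k(G)`. -/
noncomputable def gamma (G : TSGraph α) (k : ℕ) : ℕ :=
  sInf {n | ∃ S, G.Adm k S ∧ S.card = n}

/-- A paired-dominating set of `G`. -/
def IsPDS (G : TSGraph α) (D : Finset α) : Prop :=
  D ⊆ G.verts ∧
  (∀ v ∈ G.verts, v ∈ D ∨ ∃ u ∈ D, G.Adj u v) ∧
  ∃ f, G.IsPM D f

/-- `γ_p(G)`: the paired-domination number. -/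
noncomputable def gammaP (G : TSGraph α) : ℕ :=
  sInf {n | ∃ D, G.IsPDS D ∧ D.card = n}

/-- Membership in `D_p(G)`: minimum-cardinality paired-dominating sets. -/
def memDp (G : TSGraph α) (D : Finset α) : Prop :=
  G.IsPDS D ∧ D.card = G.gammaP

/-- `min(G) = min { γ_k(G) : 0 ≤ k ≤ |TS(G)| }`. -/
noncomputable def minVal (G : TSGraph α) : ℕ :=
  sInf {n | ∃ k ≤ G.TS.card, G.gamma k = n}

/-- `α(G)`: the smallest `k` with `γ_k(G) = min(G)`. -/
noncomputable def alphaVal (G : TSGraph α) : ℕ :=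
  sInf {k | k ≤ G.TS.card ∧ G.gamma k = G.minVal}

/-- `β(G)`: the largest `k` with `γ_k(G) = min(G)`. -/
noncomputable def betaVal (G : TSGraph α) : ℕ :=
  sSup {k | k ≤ G.TS.card ∧ G.gamma k = G.minVal}

/-- Membership in `Ψ(G)`: sets in some `D_k(G)` of cardinality `min(G)`. -/
def memPsi (G : TSGraph α) (D : Finset α) : Prop :=
  (∃ k, k ≤ G.TS.card ∧ G.memD k D) ∧ D.card = G.minVal

/-- Equation (2) holds for `G`. -/
def Eq2Holds (G : TSGraph α) : Prop :=
  ∀ k ≤ G.TS.card,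
    (k ≤ G.alphaVal → G.gamma k = G.minVal + G.alphaVal - k) ∧
    (G.betaVal ≤ k → G.gamma k = G.minVal + k - G.betaVal) ∧
    (G.alphaVal < k → k < G.betaVal → Even (k - G.alphaVal) → G.gamma k = G.minVal) ∧
    (G.alphaVal < k → k < G.betaVal → ¬ Even (k - G.alphaVal) → G.gamma k = G.minVal + 1)

/-- `G = Gl ⊗ Gr` (true twin composition). -/
def IsTrueTwin (G Gl Gr : TSGraph α) : Prop :=
  Disjoint Gl.verts Gr.verts ∧
  G.verts = Gl.verts ∪ Gr.verts ∧
  (∀ u v, G.Adj u v ↔ Gl.Adj u v ∨ Gr.Adj u v ∨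
    (u ∈ Gl.TS ∧ v ∈ Gr.TS) ∨ (u ∈ Gr.TS ∧ v ∈ Gl.TS)) ∧
  G.TS = Gl.TS ∪ Gr.TS

/-- `G = Gl ⊙ Gr` (false twin composition). -/
def IsFalseTwin (G Gl Gr : TSGraph α) : Prop :=
  Disjoint Gl.verts Gr.verts ∧
  G.verts = Gl.verts ∪ Gr.verts ∧
  (∀ u v, G.Adj u v ↔ Gl.Adj u v ∨ Gr.Adj u v) ∧
  G.TS = Gl.TS ∪ Gr.TS

/-- `G = Gl ⊕ Gr` (attachment composition). -/
def IsAttach (G Gl Gr : TSGraph α) : Prop :=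
  Disjoint Gl.verts Gr.verts ∧
  G.verts = Gl.verts ∪ Gr.verts ∧
  (∀ u v, G.Adj u v ↔ Gl.Adj u v ∨ Gr.Adj u v ∨
    (u ∈ Gl.TS ∧ v ∈ Gr.TS) ∨ (u ∈ Gr.TS ∧ v ∈ Gl.TS)) ∧
  G.TS = Gl.TS

/-- The twin-set graph `G` arises from a decomposition tree all of whose associated
twin-set graphs satisfy the property `P`. -/
inductive FromDecompTree (P : TSGraph α → Prop) : TSGraph α → Prop where
  | single (G : TSGraph α) (v : α) (hv : G.verts = {v}) (hts : G.TS = {v})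
      (hadj : ∀ u w, ¬ G.Adj u w) (hP : P G) : FromDecompTree P G
  | ttwin (G Gl Gr : TSGraph α) (hl : FromDecompTree P Gl) (hr : FromDecompTree P Gr)
      (h : IsTrueTwin G Gl Gr) (hP : P G) : FromDecompTree P G
  | ftwin (G Gl Gr : TSGraph α) (hl : FromDecompTree P Gl) (hr : FromDecompTree P Gr)
      (h : IsFalseTwin G Gl Gr) (hP : P G) : FromDecompTree P G
  | attach (G Gl Gr : TSGraph α) (hl : FromDecompTree P Gl) (hr : FromDecompTree P Gr)
      (h : IsAttach G Gl Gr) (hP : P G) : FromDecompTree P G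

end TSGraph

namespace TSGraphAux

open TSGraph

variable {α : Type*} [DecidableEq α]

lemma even_card_of_pm (G : TSGraph α) :
    ∀ (M : Finset α) (f : α → α), G.IsPM M f → Even M.card := by
  intro M
  induction M using Finset.strongInduction with
  | _ M ih =>
    intro f hf
    rcases M.eq_empty_or_nonempty with rfl | ⟨v, hv⟩
    · simp
    · obtain ⟨hfv, hadj, hff⟩ := hf v hv
      have hne : f v ≠ v := fun h => G.irrefl v (by rw [h] at hadj; exact hadj)
      set M' := (M.erase v).erase (f v) with hM'
      have hsub : M' ⊂ M :=
        lt_of_le_of_lt (Finset.erase_subset _ _) (Finset.erase_ssubset hv)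
      have hpm : G.IsPM M' f := by
        intro u hu
        simp only [hM', Finset.mem_erase] at hu
        obtain ⟨hufv, huv, huM⟩ := hu
        obtain ⟨h1, h2, h3⟩ := hf u huM
        refine ⟨?_, h2, h3⟩
        simp only [hM', Finset.mem_erase]
        refine ⟨?_, ?_, h1⟩
        · intro hc; apply huv; rw [← hff, ← hc, h3]
        · intro hc; apply hufv; rw [← h3, hc]
      obtain ⟨m, hm⟩ := ih M' hsub f hpm
      have hfvM : f v ∈ M.erase v := Finset.mem_erase.mpr ⟨hne, hfv⟩
      have hc1 : M'.card = (M.erase v).card - 1 := Finset.card_erase_of_mem hfvM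
      have hc2 : (M.erase v).card = M.card - 1 := Finset.card_erase_of_mem hv
      have hpos : 0 < (M.erase v).card := Finset.card_pos.mpr ⟨f v, hfvM⟩
      have hpos2 : 0 < M.card := Finset.card_pos.mpr ⟨v, hv⟩
      exact ⟨m + 1, by omega⟩

lemma adm_card_mod (G : TSGraph α) {k : ℕ} {S : Finset α} (h : G.Adm k S) :
    S.card % 2 = k % 2 := by
  obtain ⟨hsub, hdom, X, hX, hXc, f, hf⟩ := h
  have hXS : X ⊆ S := fun x hx => (Finset.mem_inter.mp (hX hx)).1
  have h1 : (S \ X).card + X.card = S.card := Finset.card_sdiff_add_card_eq_card hXS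
  obtain ⟨m, hm⟩ := even_card_of_pm G (S \ X) f hf
  omega

lemma up (G : TSGraph α) {k : ℕ} {S : Finset α} (hk : k < G.TS.card) (h : G.Adm k S) :
    ∃ S', G.Adm (k + 1) S' ∧ S'.card ≤ S.card + 1 := by
  obtain ⟨hsub, hdom, X, hX, hXc, f, hf⟩ := h
  have hXS : ∀ x ∈ X, x ∈ S := fun x hx => (Finset.mem_inter.mp (hX hx)).1
  have hXTS : ∀ x ∈ X, x ∈ G.TS := fun x hx => (Finset.mem_inter.mp (hX hx)).2
  by_cases hTSS : ∃ y ∈ G.TS, y ∉ S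
  · -- add a fresh twin vertex
    obtain ⟨y, hyTS, hyS⟩ := hTSS
    refine ⟨insert y S, ⟨?_, ?_, insert y X, ?_, ?_, f, ?_⟩, ?_⟩
    · intro v hv; rcases Finset.mem_insert.mp hv with rfl | hv
      · exact G.TS_sub hyTS
      · exact hsub hv
    · intro v hv hvTS
      rcases hdom v hv hvTS with h' | ⟨u, hu, hadj⟩
      · exact Or.inl (Finset.mem_insert_of_mem h')
      · exact Or.inr ⟨u, Finset.mem_insert_of_mem hu, hadj⟩
    · intro x hx; rcases Finset.mem_insert.mp hx with rfl | hx
      · exact Finset.mem_inter.mpr ⟨Finset.mem_insert_self _ _, hyTS⟩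
      · exact Finset.mem_inter.mpr ⟨Finset.mem_insert_of_mem (hXS _ hx), hXTS _ hx⟩
    · rw [Finset.card_insert_of_notMem (fun hc => hyS (hXS _ hc)), hXc]
    · intro v hv
      simp only [Finset.mem_sdiff, Finset.mem_insert, not_or] at hv
      obtain ⟨h1, h2, h3⟩ := hv
      have hvS : v ∈ S := by
        rcases h1 with rfl | h1
        · exact absurd rfl h2
        · exact h1
      obtain ⟨g1, g2, g3⟩ := hf v (Finset.mem_sdiff.mpr ⟨hvS, h3⟩)
      have hfvS : f v ∈ S := (Finset.mem_sdiff.mp g1).1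
      refine ⟨?_, g2, g3⟩
      simp only [Finset.mem_sdiff, Finset.mem_insert, not_or]
      exact ⟨Or.inr hfvS, fun hc => hyS (hc ▸ hfvS), (Finset.mem_sdiff.mp g1).2⟩
    · exact Finset.card_insert_le _ _
  · -- TS ⊆ S
    push_neg at hTSS
    have hns : ¬ G.TS ⊆ X := fun hc => absurd (Finset.card_le_card hc) (by omega)
    obtain ⟨y, hyTS, hyX⟩ := Finset.not_subset.mp hns
    have hyS : y ∈ S := hTSS y hyTS
    have hyM : y ∈ S \ X := Finset.mem_sdiff.mpr ⟨hyS, hyX⟩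
    obtain ⟨hz1, hz2, hz3⟩ := hf y hyM
    set z := f y with hzdef
    have hzS : z ∈ S := (Finset.mem_sdiff.mp hz1).1
    have hzX : z ∉ X := (Finset.mem_sdiff.mp hz1).2
    have hyz : y ≠ z := fun h => G.irrefl y (by rw [← h] at hz2; exact hz2)
    by_cases hw : ∃ w, G.Adj z w ∧ w ∉ S
    · -- add an outside neighbor of z, move y into X
      obtain ⟨w, hwadj, hwS⟩ := hw
      have hwy : w ≠ y := fun h => hwS (h ▸ hyS)
      have hwz : w ≠ z := fun h => hwS (h ▸ hzS)
      have hFz : (fun v => if v = z then w else if v = w then z else f v) z = w := by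
        show (if z = z then w else if z = w then z else f z) = w
        rw [if_pos rfl]
      have hFw : (fun v => if v = z then w else if v = w then z else f v) w = z := by
        show (if w = z then w else if w = w then z else f w) = z
        rw [if_neg hwz, if_pos rfl]
      refine ⟨insert w S, ⟨?_, ?_, insert y X, ?_, ?_,
        (fun v => if v = z then w else if v = w then z else f v), ?_⟩, ?_⟩
      · intro v hv; rcases Finset.mem_insert.mp hv with rfl | hv
        · exact (G.adj_mem z v hwadj).2
        · exact hsub hv
      · intro v hv hvTS
        rcases hdom v hv hvTS with h' | ⟨u, hu, hadj⟩
        · exact Or.inl (Finset.mem_insert_of_mem h')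
        · exact Or.inr ⟨u, Finset.mem_insert_of_mem hu, hadj⟩
      · intro x hx; rcases Finset.mem_insert.mp hx with rfl | hx
        · exact Finset.mem_inter.mpr ⟨Finset.mem_insert_of_mem hyS, hyTS⟩
        · exact Finset.mem_inter.mpr ⟨Finset.mem_insert_of_mem (hXS _ hx), hXTS _ hx⟩
      · rw [Finset.card_insert_of_notMem hyX, hXc]
      · intro v hv
        simp only [Finset.mem_sdiff, Finset.mem_insert, not_or] at hv
        obtain ⟨h1, h2, h3⟩ := hv
        rcases h1 with h1 | hvS
        · -- v = w
          rw [h1, hFw, hFz]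
          refine ⟨?_, G.symm _ _ hwadj, rfl⟩
          simp only [Finset.mem_sdiff, Finset.mem_insert, not_or]
          exact ⟨Or.inr hzS, fun hc => hyz hc.symm, hzX⟩
        · by_cases hvz : v = z
          · rw [hvz, hFz]
            refine ⟨?_, hwadj, hFw⟩
            simp only [Finset.mem_sdiff, Finset.mem_insert, not_or]
            exact ⟨Or.inl trivial, hwy, fun hc => hwS (hXS _ hc)⟩
          · have hvw : v ≠ w := fun h => hwS (h ▸ hvS)
            have hFv : (fun u => if u = z then w else if u = w then z else f u) v = f v := by
              show (if v = z then w else if v = w then z else f v) = f v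
              rw [if_neg hvz, if_neg hvw]
            obtain ⟨g1, g2, g3⟩ := hf v (Finset.mem_sdiff.mpr ⟨hvS, h3⟩)
            obtain ⟨hfvS, hfvX⟩ := Finset.mem_sdiff.mp g1
            have hfvy : f v ≠ y := by
              intro hc
              apply hvz
              rw [← g3, hc]
            have hfvz : f v ≠ z := by
              intro hc
              apply h2
              have h5 := congrArg f hc
              rw [g3] at h5
              rw [h5, hzdef, hz3]
            have hfvw : f v ≠ w := fun h => hwS (h ▸ hfvS)
            have hFfv : (fun u => if u = z then w else if u = w then z else f u) (f v)
                = f (f v) := by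
              show (if f v = z then w else if f v = w then z else f (f v)) = f (f v)
              rw [if_neg hfvz, if_neg hfvw]
            rw [hFv, hFfv, g3]
            refine ⟨?_, g2, rfl⟩
            simp only [Finset.mem_sdiff, Finset.mem_insert, not_or]
            exact ⟨Or.inr hfvS, hfvy, hfvX⟩
      · exact Finset.card_insert_le _ _
    · -- all neighbors of z are in S: remove z, move y into X
      push_neg at hw
      refine ⟨S.erase z, ⟨?_, ?_, insert y X, ?_, ?_, f, ?_⟩, ?_⟩
      · exact fun v hv => hsub (Finset.mem_of_mem_erase hv)
      · intro v hv hvTS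
        rcases hdom v hv hvTS with h' | ⟨u, hu, hadj⟩
        · by_cases hvz : v = z
          · subst hvz
            exact Or.inr ⟨y, Finset.mem_erase.mpr ⟨hyz, hyS⟩, hz2⟩
          · exact Or.inl (Finset.mem_erase.mpr ⟨hvz, h'⟩)
        · by_cases huz : u = z
          · subst huz
            have hvS : v ∈ S := hw v hadj
            have hvz : v ≠ z := fun h => G.irrefl z (h ▸ hadj)
            exact Or.inl (Finset.mem_erase.mpr ⟨hvz, hvS⟩)
          · exact Or.inr ⟨u, Finset.mem_erase.mpr ⟨huz, hu⟩, hadj⟩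
      · intro x hx; rcases Finset.mem_insert.mp hx with rfl | hx
        · exact Finset.mem_inter.mpr ⟨Finset.mem_erase.mpr ⟨hyz, hyS⟩, hyTS⟩
        · exact Finset.mem_inter.mpr
            ⟨Finset.mem_erase.mpr ⟨fun h => hzX (h ▸ hx), hXS _ hx⟩, hXTS _ hx⟩
      · rw [Finset.card_insert_of_notMem hyX, hXc]
      · intro v hv
        simp only [Finset.mem_sdiff, Finset.mem_erase, Finset.mem_insert, not_or] at hv
        obtain ⟨⟨hvz, hvS⟩, hvy, hvX⟩ := hv
        obtain ⟨g1, g2, g3⟩ := hf v (Finset.mem_sdiff.mpr ⟨hvS, hvX⟩)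
        obtain ⟨hfvS, hfvX⟩ := Finset.mem_sdiff.mp g1
        have hfvy : f v ≠ y := fun hc => hvz (by rw [← g3, hc])
        have hfvz : f v ≠ z := by
          intro hc
          apply hvy
          have h5 := congrArg f hc
          rw [g3, hzdef, hz3] at h5
          exact h5
        refine ⟨?_, g2, g3⟩
        simp only [Finset.mem_sdiff, Finset.mem_erase, Finset.mem_insert, not_or]
        exact ⟨⟨hfvz, hfvS⟩, hfvy, hfvX⟩
      · exact le_trans Finset.card_erase_le (by omega)

lemma down (G : TSGraph α) {k : ℕ} {T : Finset α} (h : G.Adm (k + 1) T) :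
    ∃ T', G.Adm k T' ∧ T'.card ≤ T.card + 1 := by
  obtain ⟨hsub, hdom, X, hX, hXc, g, hg⟩ := h
  have hXT : ∀ x ∈ X, x ∈ T := fun x hx => (Finset.mem_inter.mp (hX hx)).1
  have hXTS : ∀ x ∈ X, x ∈ G.TS := fun x hx => (Finset.mem_inter.mp (hX hx)).2
  have hXne : X.Nonempty := Finset.card_pos.mp (by omega)
  obtain ⟨y, hyX⟩ := hXne
  have hyT : y ∈ T := hXT y hyX
  have hyTS : y ∈ G.TS := hXTS y hyX
  have hXec : (X.erase y).card = k := by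
    rw [Finset.card_erase_of_mem hyX, hXc]
    omega
  have hXe : ∀ x ∈ X.erase y, x ∈ T ∩ G.TS := fun x hx => hX (Finset.mem_of_mem_erase hx)
  by_cases hC1 : ∃ w, G.Adj y w ∧ w ∉ T
  · -- pair y with an outside neighbor
    obtain ⟨w, hwadj, hwT⟩ := hC1
    have hwy : w ≠ y := fun h => hwT (h ▸ hyT)
    have hFy : (fun v => if v = y then w else if v = w then y else g v) y = w := by
      show (if y = y then w else if y = w then y else g y) = w
      rw [if_pos rfl]
    have hFw : (fun v => if v = y then w else if v = w then y else g v) w = y := by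
      show (if w = y then w else if w = w then y else g w) = y
      rw [if_neg hwy, if_pos rfl]
    refine ⟨insert w T, ⟨?_, ?_, X.erase y, ?_, hXec,
      (fun v => if v = y then w else if v = w then y else g v), ?_⟩, ?_⟩
    · intro v hv; rcases Finset.mem_insert.mp hv with rfl | hv
      · exact (G.adj_mem y v hwadj).2
      · exact hsub hv
    · intro v hv hvTS
      rcases hdom v hv hvTS with h' | ⟨u, hu, hadj⟩
      · exact Or.inl (Finset.mem_insert_of_mem h')
      · exact Or.inr ⟨u, Finset.mem_insert_of_mem hu, hadj⟩
    · intro x hx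
      obtain ⟨hxT, hxTS⟩ := Finset.mem_inter.mp (hXe x hx)
      exact Finset.mem_inter.mpr ⟨Finset.mem_insert_of_mem hxT, hxTS⟩
    · intro v hv
      simp only [Finset.mem_sdiff, Finset.mem_insert, Finset.mem_erase, not_and] at hv
      obtain ⟨h1, h2⟩ := hv
      rcases h1 with h1 | hvT
      · -- v = w
        rw [h1, hFw, hFy]
        refine ⟨?_, G.symm _ _ hwadj, rfl⟩
        simp only [Finset.mem_sdiff, Finset.mem_insert, Finset.mem_erase, not_and]
        exact ⟨Or.inr hyT, fun hc => absurd rfl hc⟩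
      · by_cases hvy : v = y
        · rw [hvy, hFy]
          refine ⟨?_, hwadj, hFw⟩
          simp only [Finset.mem_sdiff, Finset.mem_insert, Finset.mem_erase, not_and]
          exact ⟨Or.inl trivial, fun _ hc => hwT (hXT _ hc)⟩
        · have hvX : v ∉ X := h2 hvy
          have hvw : v ≠ w := fun h => hwT (h ▸ hvT)
          obtain ⟨g1, g2, g3⟩ := hg v (Finset.mem_sdiff.mpr ⟨hvT, hvX⟩)
          obtain ⟨hgvT, hgvX⟩ := Finset.mem_sdiff.mp g1
          have hgvy : g v ≠ y := fun hc => hgvX (hc ▸ hyX)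
          have hgvw : g v ≠ w := fun hc => hwT (hc ▸ hgvT)
          have hFv : (fun u => if u = y then w else if u = w then y else g u) v = g v := by
            show (if v = y then w else if v = w then y else g v) = g v
            rw [if_neg hvy, if_neg hvw]
          have hFgv : (fun u => if u = y then w else if u = w then y else g u) (g v)
              = g (g v) := by
            show (if g v = y then w else if g v = w then y else g (g v)) = g (g v)
            rw [if_neg hgvy, if_neg hgvw]
          rw [hFv, hFgv, g3]
          refine ⟨?_, g2, rfl⟩
          simp only [Finset.mem_sdiff, Finset.mem_insert, Finset.mem_erase, not_and]
          exact ⟨Or.inr hgvT, fun _ => hgvX⟩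
    · exact Finset.card_insert_le _ _
  · push_neg at hC1
    by_cases hC2 : ∃ z, G.Adj y z ∧ z ∈ T ∧ z ∉ X
    · -- y has a matched neighbor z; z' = g z gets fixed up
      obtain ⟨z, hyzadj, hzT, hzX⟩ := hC2
      have hzM : z ∈ T \ X := Finset.mem_sdiff.mpr ⟨hzT, hzX⟩
      obtain ⟨hz'1, hz'2, hz'3⟩ := hg z hzM
      set z' := g z with hz'def
      have hz'T : z' ∈ T := (Finset.mem_sdiff.mp hz'1).1
      have hz'X : z' ∉ X := (Finset.mem_sdiff.mp hz'1).2
      have hzy : z ≠ y := fun h => hzX (h ▸ hyX)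
      have hz'y : z' ≠ y := fun h => hz'X (h ▸ hyX)
      have hzz' : z ≠ z' := fun h => G.irrefl z (by rw [← h] at hz'2; exact hz'2)
      by_cases hC2a : ∃ w, G.Adj z' w ∧ w ∉ T
      · -- re-pair: y–z, z'–w (w outside)
        obtain ⟨w, hwadj, hwT⟩ := hC2a
        have hwy : w ≠ y := fun h => hwT (h ▸ hyT)
        have hwz : w ≠ z := fun h => hwT (h ▸ hzT)
        have hwz' : w ≠ z' := fun h => hwT (h ▸ hz'T)
        have hFy : (fun v => if v = y then z else if v = z then y else
            if v = z' then w else if v = w then z' else g v) y = z := by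
          show (if y = y then z else if y = z then y else
            if y = z' then w else if y = w then z' else g y) = z
          rw [if_pos rfl]
        have hFz : (fun v => if v = y then z else if v = z then y else
            if v = z' then w else if v = w then z' else g v) z = y := by
          show (if z = y then z else if z = z then y else
            if z = z' then w else if z = w then z' else g z) = y
          rw [if_neg hzy, if_pos rfl]
        have hFz' : (fun v => if v = y then z else if v = z then y else
            if v = z' then w else if v = w then z' else g v) z' = w := by
          show (if z' = y then z else if z' = z then y else
            if z' = z' then w else if z' = w then z' else g z') = w
          rw [if_neg hz'y, if_neg (Ne.symm hzz'), if_pos rfl]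
        have hFw : (fun v => if v = y then z else if v = z then y else
            if v = z' then w else if v = w then z' else g v) w = z' := by
          show (if w = y then z else if w = z then y else
            if w = z' then w else if w = w then z' else g w) = z'
          rw [if_neg hwy, if_neg hwz, if_neg hwz', if_pos rfl]
        refine ⟨insert w T, ⟨?_, ?_, X.erase y, ?_, hXec,
          (fun v => if v = y then z else if v = z then y else
            if v = z' then w else if v = w then z' else g v), ?_⟩, ?_⟩
        · intro v hv; rcases Finset.mem_insert.mp hv with rfl | hv
          · exact (G.adj_mem z' v hwadj).2
          · exact hsub hv
        · intro v hv hvTS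
          rcases hdom v hv hvTS with h' | ⟨u, hu, hadj⟩
          · exact Or.inl (Finset.mem_insert_of_mem h')
          · exact Or.inr ⟨u, Finset.mem_insert_of_mem hu, hadj⟩
        · intro x hx
          obtain ⟨hxT, hxTS⟩ := Finset.mem_inter.mp (hXe x hx)
          exact Finset.mem_inter.mpr ⟨Finset.mem_insert_of_mem hxT, hxTS⟩
        · intro v hv
          simp only [Finset.mem_sdiff, Finset.mem_insert, Finset.mem_erase, not_and] at hv
          obtain ⟨h1, h2⟩ := hv
          rcases h1 with h1 | hvT
          · -- v = w
            rw [h1, hFw, hFz']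
            refine ⟨?_, G.symm _ _ hwadj, rfl⟩
            simp only [Finset.mem_sdiff, Finset.mem_insert, Finset.mem_erase, not_and]
            exact ⟨Or.inr hz'T, fun _ => hz'X⟩
          · by_cases hvy : v = y
            · rw [hvy, hFy, hFz]
              refine ⟨?_, hyzadj, rfl⟩
              simp only [Finset.mem_sdiff, Finset.mem_insert, Finset.mem_erase, not_and]
              exact ⟨Or.inr hzT, fun _ => hzX⟩
            · by_cases hvz : v = z
              · rw [hvz, hFz, hFy]
                refine ⟨?_, G.symm _ _ hyzadj, rfl⟩
                simp only [Finset.mem_sdiff, Finset.mem_insert, Finset.mem_erase, not_and]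
                exact ⟨Or.inr hyT, fun hc => absurd rfl hc⟩
              · by_cases hvz' : v = z'
                · rw [hvz', hFz', hFw]
                  refine ⟨?_, hwadj, rfl⟩
                  simp only [Finset.mem_sdiff, Finset.mem_insert, Finset.mem_erase, not_and]
                  exact ⟨Or.inl trivial, fun _ hc => hwT (hXT _ hc)⟩
                · have hvX : v ∉ X := h2 hvy
                  have hvw : v ≠ w := fun h => hwT (h ▸ hvT)
                  obtain ⟨g1, g2, g3⟩ := hg v (Finset.mem_sdiff.mpr ⟨hvT, hvX⟩)
                  obtain ⟨hgvT, hgvX⟩ := Finset.mem_sdiff.mp g1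
                  have hgvy : g v ≠ y := fun hc => hgvX (hc ▸ hyX)
                  have hgvz : g v ≠ z := by
                    intro hc
                    apply hvz'
                    have h5 := congrArg g hc
                    rw [g3] at h5
                    rw [h5, hz'def]
                  have hgvz' : g v ≠ z' := by
                    intro hc
                    apply hvz
                    have h5 := congrArg g hc
                    rw [g3, hz'def, hz'3] at h5
                    exact h5
                  have hgvw : g v ≠ w := fun hc => hwT (hc ▸ hgvT)
                  have hFv : (fun u => if u = y then z else if u = z then y else
                      if u = z' then w else if u = w then z' else g u) v = g v := by
                    show (if v = y then z else if v = z then y else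
                      if v = z' then w else if v = w then z' else g v) = g v
                    rw [if_neg hvy, if_neg hvz, if_neg hvz', if_neg hvw]
                  have hFgv : (fun u => if u = y then z else if u = z then y else
                      if u = z' then w else if u = w then z' else g u) (g v) = g (g v) := by
                    show (if g v = y then z else if g v = z then y else
                      if g v = z' then w else if g v = w then z' else g (g v)) = g (g v)
                    rw [if_neg hgvy, if_neg hgvz, if_neg hgvz', if_neg hgvw]
                  rw [hFv, hFgv, g3]
                  refine ⟨?_, g2, rfl⟩
                  simp only [Finset.mem_sdiff, Finset.mem_insert, Finset.mem_erase, not_and]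
                  exact ⟨Or.inr hgvT, fun _ => hgvX⟩
        · exact Finset.card_insert_le _ _
      · -- all neighbors of z' are in T: remove z', re-pair y–z
        push_neg at hC2a
        have hFy : (fun v => if v = y then z else if v = z then y else g v) y = z := by
          show (if y = y then z else if y = z then y else g y) = z
          rw [if_pos rfl]
        have hFz : (fun v => if v = y then z else if v = z then y else g v) z = y := by
          show (if z = y then z else if z = z then y else g z) = y
          rw [if_neg hzy, if_pos rfl]
        refine ⟨T.erase z', ⟨?_, ?_, X.erase y, ?_, hXec,
          (fun v => if v = y then z else if v = z then y else g v), ?_⟩, ?_⟩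
        · exact fun v hv => hsub (Finset.mem_of_mem_erase hv)
        · intro v hv hvTS
          rcases hdom v hv hvTS with h' | ⟨u, hu, hadj⟩
          · by_cases hvz' : v = z'
            · subst hvz'
              exact Or.inr ⟨z, Finset.mem_erase.mpr ⟨hzz', hzT⟩, hz'2⟩
            · exact Or.inl (Finset.mem_erase.mpr ⟨hvz', h'⟩)
          · by_cases huz' : u = z'
            · subst huz'
              have hvT : v ∈ T := hC2a v hadj
              have hvz' : v ≠ z' := fun h => G.irrefl z' (h ▸ hadj)
              exact Or.inl (Finset.mem_erase.mpr ⟨hvz', hvT⟩)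
            · exact Or.inr ⟨u, Finset.mem_erase.mpr ⟨huz', hu⟩, hadj⟩
        · intro x hx
          obtain ⟨hxT, hxTS⟩ := Finset.mem_inter.mp (hXe x hx)
          exact Finset.mem_inter.mpr
            ⟨Finset.mem_erase.mpr
              ⟨fun h => hz'X (h ▸ Finset.mem_of_mem_erase hx), hxT⟩, hxTS⟩
        · intro v hv
          simp only [Finset.mem_sdiff, Finset.mem_erase, not_and] at hv
          obtain ⟨⟨hvz', hvT⟩, h2⟩ := hv
          by_cases hvy : v = y
          · rw [hvy, hFy, hFz]
            refine ⟨?_, hyzadj, rfl⟩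
            simp only [Finset.mem_sdiff, Finset.mem_erase, not_and]
            exact ⟨⟨hzz', hzT⟩, fun _ => hzX⟩
          · by_cases hvz : v = z
            · rw [hvz, hFz, hFy]
              refine ⟨?_, G.symm _ _ hyzadj, rfl⟩
              simp only [Finset.mem_sdiff, Finset.mem_erase, not_and]
              exact ⟨⟨Ne.symm hz'y, hyT⟩, fun hc => absurd rfl hc⟩
            · have hvX : v ∉ X := h2 hvy
              obtain ⟨g1, g2, g3⟩ := hg v (Finset.mem_sdiff.mpr ⟨hvT, hvX⟩)
              obtain ⟨hgvT, hgvX⟩ := Finset.mem_sdiff.mp g1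
              have hgvy : g v ≠ y := fun hc => hgvX (hc ▸ hyX)
              have hgvz : g v ≠ z := by
                intro hc
                apply hvz'
                have h5 := congrArg g hc
                rw [g3] at h5
                rw [h5, hz'def]
              have hgvz' : g v ≠ z' := by
                intro hc
                apply hvz
                have h5 := congrArg g hc
                rw [g3, hz'def, hz'3] at h5
                exact h5
              have hFv : (fun u => if u = y then z else if u = z then y else g u) v
                  = g v := by
                show (if v = y then z else if v = z then y else g v) = g v
                rw [if_neg hvy, if_neg hvz]
              have hFgv : (fun u => if u = y then z else if u = z then y else g u) (g v)
                  = g (g v) := by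
                show (if g v = y then z else if g v = z then y else g (g v)) = g (g v)
                rw [if_neg hgvy, if_neg hgvz]
              rw [hFv, hFgv, g3]
              refine ⟨?_, g2, rfl⟩
              simp only [Finset.mem_sdiff, Finset.mem_erase, not_and]
              exact ⟨⟨hgvz', hgvT⟩, fun _ => hgvX⟩
        · exact le_trans Finset.card_erase_le (by omega)
    · -- all neighbors of y lie in X: remove y
      push_neg at hC2
      refine ⟨T.erase y, ⟨?_, ?_, X.erase y, ?_, hXec, g, ?_⟩, ?_⟩
      · exact fun v hv => hsub (Finset.mem_of_mem_erase hv)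
      · intro v hv hvTS
        rcases hdom v hv hvTS with h' | ⟨u, hu, hadj⟩
        · have hvy : v ≠ y := fun h => hvTS (h ▸ hyTS)
          exact Or.inl (Finset.mem_erase.mpr ⟨hvy, h'⟩)
        · by_cases huy : u = y
          · subst huy
            have hvT : v ∈ T := hC1 v hadj
            have hvX : v ∈ X := hC2 v hadj hvT
            exact absurd (hXTS v hvX) hvTS
          · exact Or.inr ⟨u, Finset.mem_erase.mpr ⟨huy, hu⟩, hadj⟩
      · intro x hx
        obtain ⟨hxT, hxTS⟩ := Finset.mem_inter.mp (hXe x hx)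
        exact Finset.mem_inter.mpr
          ⟨Finset.mem_erase.mpr ⟨(Finset.mem_erase.mp hx).1, hxT⟩, hxTS⟩
      · intro v hv
        simp only [Finset.mem_sdiff, Finset.mem_erase, not_and] at hv
        obtain ⟨⟨hvy, hvT⟩, h2⟩ := hv
        have hvX : v ∉ X := h2 hvy
        obtain ⟨g1, g2, g3⟩ := hg v (Finset.mem_sdiff.mpr ⟨hvT, hvX⟩)
        obtain ⟨hgvT, hgvX⟩ := Finset.mem_sdiff.mp g1
        have hgvy : g v ≠ y := fun hc => hgvX (hc ▸ hyX)
        refine ⟨?_, g2, g3⟩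
        simp only [Finset.mem_sdiff, Finset.mem_erase, not_and]
        exact ⟨⟨hgvy, hgvT⟩, fun _ => hgvX⟩
      · exact le_trans Finset.card_erase_le (by omega)

end TSGraphAux


open TSGraph in
theorem stmt3' {α : Type*} [DecidableEq α] (H : TSGraph α) (k : ℕ)
    (hk : k < H.TS.card)
    (h1 : H.DkNonempty k) (h2 : H.DkNonempty (k + 1)) :
    |(H.gamma k : ℤ) - (H.gamma (k + 1) : ℤ)| = 1 := by
  obtain ⟨S₁, hS₁⟩ := h1
  obtain ⟨T₁, hT₁⟩ := h2
  have hne1 : {n | ∃ S, H.Adm k S ∧ S.card = n}.Nonempty := ⟨S₁.card, S₁, hS₁.1, rfl⟩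
  have hne2 : {n | ∃ S, H.Adm (k+1) S ∧ S.card = n}.Nonempty := ⟨T₁.card, T₁, hT₁.1, rfl⟩
  have hg1 : H.gamma k ∈ {n | ∃ S, H.Adm k S ∧ S.card = n} := Nat.sInf_mem hne1
  have hg2 : H.gamma (k+1) ∈ {n | ∃ S, H.Adm (k+1) S ∧ S.card = n} := Nat.sInf_mem hne2
  obtain ⟨S, hS, hScard⟩ := hg1
  obtain ⟨T, hT, hTcard⟩ := hg2
  obtain ⟨S', hS', hS'c⟩ := TSGraphAux.up H hk hS
  obtain ⟨T', hT', hT'c⟩ := TSGraphAux.down H hT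
  have hle1 : H.gamma (k+1) ≤ H.gamma k + 1 := by
    have h : H.gamma (k+1) ≤ S'.card :=
      Nat.sInf_le (show S'.card ∈ {n | ∃ S, H.Adm (k+1) S ∧ S.card = n} from ⟨S', hS', rfl⟩)
    omega
  have hle2 : H.gamma k ≤ H.gamma (k+1) + 1 := by
    have h : H.gamma k ≤ T'.card :=
      Nat.sInf_le (show T'.card ∈ {n | ∃ S, H.Adm k S ∧ S.card = n} from ⟨T', hT', rfl⟩)
    omega
  have hm1 : H.gamma k % 2 = k % 2 := by
    rw [← hScard]; exact TSGraphAux.adm_card_mod H hS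
  have hm2 : H.gamma (k+1) % 2 = (k+1) % 2 := by
    rw [← hTcard]; exact TSGraphAux.adm_card_mod H hT
  have habs : (H.gamma k : ℤ) - H.gamma (k+1) = 1 ∨ (H.gamma k : ℤ) - H.gamma (k+1) = -1 := by
    omega
  rcases habs with h | h <;> rw [h] <;> decide

open TSGraph in
/-- If `0 ≤ k < |TS(H)|` and `D_k(H)`, `D_{k+1}(H)` are nonempty,
then `|γ_k(H) − γ_{k+1}(H)| = 1`. -/
theorem stmt3 {α : Type*} [DecidableEq α] (H : TSGraph α) (k : ℕ)
    (hk : k < H.TS.card)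
    (h1 : H.DkNonempty k) (h2 : H.DkNonempty (k + 1)) :
    |(H.gamma k : ℤ) - (H.gamma (k + 1) : ℤ)| = 1 :=
  stmt3' H k hk h1 h2
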